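/- Let v_s ∈ ℝ and let f : ℝ → ℝ be differentiable. Define on ℝ³ \ {0} the vector field V_i(x) = v_s · f(|x|) · δ_{i1} and K_{ij} = −(∂_i V_j + ∂_j V_i)/2. Then for every x ≠ 0: tr K(x) = −(x₁/|x|) · v_s · f'(|x|), and II[K](x) = −((x₂² + x₃²)/(4|x|²)) · v_s² · f'(|x|)² ≤ 0. Hence the Eulerian energy density E = II[K]/(8πG) of the Alcubierre warp drive is everywhere nonpositive, independently of the value of the bubble speed v_s. -/

import Mathlib

open scoped BigOperators

/-- Partial derivative `∂ᵢ f` on `ℝ³ = Fin 3 → ℝ`. -/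
noncomputable def pd (i : Fin 3) (f : (Fin 3 → ℝ) → ℝ) (x : Fin 3 → ℝ) : ℝ :=
  fderiv ℝ f x (Pi.single i 1)

/-- Euclidean norm on `ℝ³`. -/
noncomputable def enorm3 (x : Fin 3 → ℝ) : ℝ := Real.sqrt (∑ i, x i ^ 2)

/-- Extrinsic curvature `K_{ij} = -(∂ᵢVⱼ + ∂ⱼVᵢ)/2` of the R-Warp model with shift `-V`. -/
noncomputable def Kmat (V : Fin 3 → (Fin 3 → ℝ) → ℝ) (x : Fin 3 → ℝ) (i j : Fin 3) : ℝ :=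
  -(pd i (V j) x + pd j (V i) x) / 2

/-- Second principal invariant `II[B] = ((tr B)² - tr(B²))/2` of a 3×3 array. -/
noncomputable def II3 (B : Fin 3 → Fin 3 → ℝ) : ℝ :=
  ((∑ i, B i i) ^ 2 - ∑ i, ∑ j, B i j * B j i) / 2

/-- The Alcubierre-type shift field `Vᵢ(x) = v_s · f(|x|) · δ_{i1}`
(Lean index `0` is the first axis). -/
noncomputable def alcShift (vs : ℝ) (f : ℝ → ℝ) : Fin 3 → (Fin 3 → ℝ) → ℝ :=
  fun i x => vs * f (enorm3 x) * (if i = 0 then 1 else 0)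

lemma hasFDerivAt_sumsq (x : Fin 3 → ℝ) :
    HasFDerivAt (fun y : Fin 3 → ℝ => ∑ i, y i ^ 2)
      (∑ i : Fin 3, (2 * x i) • (ContinuousLinearMap.proj i : (Fin 3 → ℝ) →L[ℝ] ℝ)) x := by
  apply HasFDerivAt.fun_sum
  intro i _
  have h1 : HasFDerivAt (fun y : Fin 3 → ℝ => y i)
      (ContinuousLinearMap.proj i : (Fin 3 → ℝ) →L[ℝ] ℝ) x :=
    (ContinuousLinearMap.proj i : (Fin 3 → ℝ) →L[ℝ] ℝ).hasFDerivAt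
  have h2 := h1.fun_mul h1
  have heq : (fun y : Fin 3 → ℝ => y i * y i) = fun y : Fin 3 → ℝ => y i ^ 2 := by
    funext y; ring
  rw [heq] at h2
  refine h2.congr_fderiv ?_
  ext v
  simp [two_mul]
  ring

lemma sumsq_pos (x : Fin 3 → ℝ) (hx : x ≠ 0) : (0:ℝ) < ∑ j, x j ^ 2 := by
  obtain ⟨i, hi⟩ := Function.ne_iff.mp hx
  exact Finset.sum_pos' (fun j _ => sq_nonneg _)
    ⟨i, Finset.mem_univ _, by simpa using sq_pos_of_ne_zero hi⟩

lemma enorm3_pos (x : Fin 3 → ℝ) (hx : x ≠ 0) : 0 < enorm3 x :=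
  Real.sqrt_pos.mpr (sumsq_pos x hx)

lemma hasFDerivAt_enorm3 (x : Fin 3 → ℝ) (hx : x ≠ 0) :
    HasFDerivAt enorm3
      ((1 / (2 * enorm3 x)) • ∑ i : Fin 3, (2 * x i) • (ContinuousLinearMap.proj i : (Fin 3 → ℝ) →L[ℝ] ℝ)) x := by
  have h := (Real.hasDerivAt_sqrt (sumsq_pos x hx).ne').comp_hasFDerivAt x (hasFDerivAt_sumsq x)
  rw [show enorm3 = ((fun x => Real.sqrt x) ∘ fun y : Fin 3 → ℝ => ∑ i, y i ^ 2) from rfl]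
  simpa [enorm3] using h

lemma pd_comp (f : ℝ → ℝ) (hf : Differentiable ℝ f) (vs : ℝ)
    (x : Fin 3 → ℝ) (hx : x ≠ 0) (i : Fin 3) :
    pd i (fun y => vs * f (enorm3 y)) x
      = vs * deriv f (enorm3 x) * (x i / enorm3 x) := by
  have hN := hasFDerivAt_enorm3 x hx
  have hc := ((hf (enorm3 x)).hasDerivAt.comp_hasFDerivAt x hN).const_mul vs
  simp only [Function.comp] at hc
  rw [pd, hc.fderiv]
  have hr := (enorm3_pos x hx).ne'
  simp [ContinuousLinearMap.smul_apply, ContinuousLinearMap.sum_apply, Pi.single_apply,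
    mul_ite, Finset.sum_ite_eq']
  field_simp

lemma pd_alc (f : ℝ → ℝ) (hf : Differentiable ℝ f) (vs : ℝ)
    (x : Fin 3 → ℝ) (hx : x ≠ 0) (i j : Fin 3) :
    pd i (alcShift vs f j) x
      = if j = 0 then vs * deriv f (enorm3 x) * (x i / enorm3 x) else 0 := by
  by_cases hj : j = 0
  · have : alcShift vs f j = fun y => vs * f (enorm3 y) := by
      funext y; simp [alcShift, hj]
    rw [this, pd_comp f hf vs x hx i, if_pos hj]
  · have : alcShift vs f j = fun _ => 0 := by
      funext y; simp [alcShift, hj]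
    rw [this, if_neg hj, pd]
    simp

/-- For the Alcubierre warp drive with differentiable form function `f`, at every
`x ≠ 0`: `tr K = -(x₁/|x|) v_s f'(|x|)` and
`II[K] = -((x₂² + x₃²)/(4|x|²)) v_s² f'(|x|)² ≤ 0`; hence the Eulerian energy density
`E = II[K]/(8πG)` is everywhere nonpositive, independently of the bubble speed `v_s`. -/
theorem alcubierre_energy_nonpositive
    (G vs : ℝ) (hG : 0 < G) (f : ℝ → ℝ) (hf : Differentiable ℝ f)
    (x : Fin 3 → ℝ) (hx : x ≠ 0) :
    (∑ i, Kmat (alcShift vs f) x i i)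
      = -(x 0 / enorm3 x) * vs * deriv f (enorm3 x) ∧
    II3 (Kmat (alcShift vs f) x)
      = -(((x 1) ^ 2 + (x 2) ^ 2) / (4 * (enorm3 x) ^ 2)) * vs ^ 2
          * (deriv f (enorm3 x)) ^ 2 ∧
    II3 (Kmat (alcShift vs f) x) ≤ 0 ∧
    II3 (Kmat (alcShift vs f) x) / (8 * Real.pi * G) ≤ 0 := by
  have hr := (enorm3_pos x hx).ne'
  have hK : ∀ i j, Kmat (alcShift vs f) x i j
      = -((if j = 0 then vs * deriv f (enorm3 x) * (x i / enorm3 x) else 0)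
        + (if i = 0 then vs * deriv f (enorm3 x) * (x j / enorm3 x) else 0)) / 2 := by
    intro i j
    rw [Kmat, pd_alc f hf vs x hx, pd_alc f hf vs x hx]
  have htr : (∑ i, Kmat (alcShift vs f) x i i)
      = -(x 0 / enorm3 x) * vs * deriv f (enorm3 x) := by
    simp [Fin.sum_univ_three, hK]
    ring
  have hII : II3 (Kmat (alcShift vs f) x)
      = -(((x 1) ^ 2 + (x 2) ^ 2) / (4 * (enorm3 x) ^ 2)) * vs ^ 2
          * (deriv f (enorm3 x)) ^ 2 := by
    have h1 : ((1:Fin 3) = 0) = False := by simp [Fin.ext_iff]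
    have h2 : ((2:Fin 3) = 0) = False := by simp [Fin.ext_iff]
    simp only [II3, Fin.sum_univ_three, hK, h1, h2, if_true, if_false, eq_self_iff_true]
    field_simp
    ring
  refine ⟨htr, hII, ?_, ?_⟩
  · rw [hII]
    have : 0 ≤ (((x 1) ^ 2 + (x 2) ^ 2) / (4 * (enorm3 x) ^ 2)) * vs ^ 2
          * (deriv f (enorm3 x)) ^ 2 := by positivity
    linarith
  · rw [hII]
    apply div_nonpos_of_nonpos_of_nonneg
    · have : 0 ≤ (((x 1) ^ 2 + (x 2) ^ 2) / (4 * (enorm3 x) ^ 2)) * vs ^ 2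
            * (deriv f (enorm3 x)) ^ 2 := by positivity
      linarith
    · positivity
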